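/- For every λ ∈ (0,1), the function z ↦ z² + √( 4(1−λz)² / ((1−λ)λ²) + z⁴ ) on ℝ attains its minimum at z = 1, and the minimum value equals 2/λ. -/

import Mathlib

open scoped Kronecker ComplexOrder
open Matrix

noncomputable section

/-- The function `z ↦ z² + √(4(1−λz)²/((1−λ)λ²) + z⁴)` attains its
minimum at `z = 1`, with minimum value `2/λ`. -/
theorem stmt15 (l : ℝ) (hl : l ∈ Set.Ioo (0:ℝ) 1) :
    (∀ z : ℝ,
      (1:ℝ) ^ 2 + Real.sqrt (4 * (1 - l * 1) ^ 2 / ((1 - l) * l ^ 2) + 1 ^ 4)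
        ≤ z ^ 2 + Real.sqrt (4 * (1 - l * z) ^ 2 / ((1 - l) * l ^ 2) + z ^ 4)) ∧
    (1:ℝ) ^ 2 + Real.sqrt (4 * (1 - l * 1) ^ 2 / ((1 - l) * l ^ 2) + 1 ^ 4) = 2 / l := by
  obtain ⟨h0, h1⟩ := hl
  have h1l : (0:ℝ) < 1 - l := by linarith
  have hval : (1:ℝ) ^ 2 + Real.sqrt (4 * (1 - l * 1) ^ 2 / ((1 - l) * l ^ 2) + 1 ^ 4)
      = 2 / l := by
    have harg : 4 * (1 - l * 1) ^ 2 / ((1 - l) * l ^ 2) + 1 ^ 4 = ((2 - l) / l) ^ 2 := by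
      field_simp
      ring
    have hp : (0:ℝ) ≤ (2 - l) / l := by
      have : (0:ℝ) < 2 - l := by linarith
      positivity
    rw [harg, Real.sqrt_sq hp]
    field_simp
    ring
  refine ⟨fun z => ?_, hval⟩
  rw [hval]
  have hA : (2 / l - z ^ 2) ^ 2 ≤ 4 * (1 - l * z) ^ 2 / ((1 - l) * l ^ 2) + z ^ 4 := by
    have hdiff : 4 * (1 - l * z) ^ 2 / ((1 - l) * l ^ 2) + z ^ 4 - (2 / l - z ^ 2) ^ 2
        = 4 * (z - 1) ^ 2 / (l * (1 - l)) := by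
      field_simp
      ring
    nlinarith [sq_nonneg (z - 1), div_nonneg (by positivity : (0:ℝ) ≤ 4 * (z - 1) ^ 2)
      (by positivity : (0:ℝ) ≤ l * (1 - l))]
  have := Real.sqrt_le_sqrt hA
  rw [Real.sqrt_sq_eq_abs] at this
  have := le_trans (le_abs_self _) this
  linarith
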